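/- arXiv:1808.04184 — 4 statements merged into one kernel-verified Lean document; each statement's English description precedes it below -/
import Mathlib

section
/- Let λ ≥ 1, let σ² > 0, and let Σ_YY ∈ ℝ^{m×m} be positive definite. Then the function f(Σ_AA) = −(λ−1) log det(Σ_YY + Σ_AA) − log det(Σ_AA + σ²I_m) + λ tr(Σ_YY⁻¹ Σ_AA) is convex on the set of positive semidefinite m×m real matrices. -/
open Matrix Finset
open scoped MatrixOrder

variable {m : ℕ}

lemma psd_smul {A : Matrix (Fin m) (Fin m) ℝ} (hA : A.PosSemidef) {c : ℝ} (hc : 0 ≤ c) :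
    (c • A).PosSemidef := by
  refine ⟨?_, fun x => ?_⟩
  · unfold Matrix.IsHermitian
    rw [conjTranspose_smul, hA.1]
    simp
  · exact (hA.smul hc).2 x

set_option maxHeartbeats 1000000 in
/-- log-det is concave on positive definite matrices: the combination inequality. -/
lemma logdet_key {M N : Matrix (Fin m) (Fin m) ℝ} (hM : M.PosDef) (hN : N.PosDef)
    {a b : ℝ} (ha : 0 ≤ a) (hb : 0 ≤ b) (hab : a + b = 1) :
    a * Real.log M.det + b * Real.log N.det ≤ Real.log (a • M + b • N).det := by
  classical
  set S := CFC.sqrt M with hSdef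
  have hS : S.PosSemidef := (CFC.sqrt_nonneg M).posSemidef
  have hSS : S * S = M := CFC.sqrt_mul_sqrt_self M hM.posSemidef.nonneg
  have hdetM : 0 < M.det := hM.det_pos
  have hdetN : 0 < N.det := hN.det_pos
  have hdetS2 : S.det * S.det = M.det := by rw [← det_mul, hSS]
  have hdS : S.det ≠ 0 := by
    intro h
    rw [h, mul_zero] at hdetS2
    exact hdetM.ne hdetS2
  have hSu : IsUnit S.det := hdS.isUnit
  have hSinv1 : S * S⁻¹ = 1 := mul_nonsing_inv S hSu
  have hSinv2 : S⁻¹ * S = 1 := nonsing_inv_mul S hSu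
  set C := S⁻¹ * N * S⁻¹ with hCdef
  have hSinvH : (S⁻¹)ᴴ = S⁻¹ := hS.inv.1
  have hC : C.PosSemidef := by
    have := hN.posSemidef.conjTranspose_mul_mul_same S⁻¹
    rwa [hSinvH] at this
  have hdetC : C.det = S.det⁻¹ * N.det * S.det⁻¹ := by
    rw [hCdef, det_mul, det_mul, det_nonsing_inv]
    simp [Ring.inverse_eq_inv']
  have hdetCpos : 0 < C.det := by
    rw [hdetC]
    have h1 : 0 < S.det⁻¹ * S.det⁻¹ := by
      rcases hdS.lt_or_gt with h | h
      · have : S.det⁻¹ < 0 := inv_neg''.mpr h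
        nlinarith
      · have : 0 < S.det⁻¹ := inv_pos.mpr h
        nlinarith
    nlinarith
  -- spectral data
  set μ := hC.1.eigenvalues with hμdef
  set U := (hC.1.eigenvectorUnitary : Matrix (Fin m) (Fin m) ℝ) with hUdef
  have hUU : U * star U = 1 := (Matrix.mem_unitaryGroup_iff).mp hC.1.eigenvectorUnitary.2
  have hofReal : (RCLike.ofReal ∘ μ : Fin m → ℝ) = μ := by
    funext i; simp
  have hspec : C = U * diagonal μ * star U := by
    have := hC.1.spectral_theorem
    rwa [hofReal] at this
  have hμprod : C.det = ∏ i, μ i := by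
    simpa using hC.1.det_eq_prod_eigenvalues
  have hμnn : ∀ i, 0 ≤ μ i := hC.eigenvalues_nonneg
  have hμpos : ∀ i, 0 < μ i := by
    intro i
    rcases (hμnn i).lt_or_eq with h | h
    · exact h
    · exact absurd (hμprod.trans (Finset.prod_eq_zero (Finset.mem_univ i) h.symm))
        hdetCpos.ne'
  -- factorization of the convex combination
  have hfact : a • M + b • N = S * (a • (1 : Matrix (Fin m) (Fin m) ℝ) + b • C) * S := by
    have h1 : S * (a • (1 : Matrix (Fin m) (Fin m) ℝ)) * S = a • M := by
      rw [Matrix.mul_smul, Matrix.smul_mul, mul_one, hSS]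
    have h2 : S * (b • C) * S = b • N := by
      rw [Matrix.mul_smul, Matrix.smul_mul]
      congr 1
      calc S * C * S = (S * S⁻¹) * N * (S⁻¹ * S) := by
            rw [hCdef]; simp only [Matrix.mul_assoc]
        _ = N := by rw [hSinv1, hSinv2, one_mul, mul_one]
    rw [mul_add, add_mul, h1, h2]
  -- the inner matrix diagonalizes
  have hinner : a • (1 : Matrix (Fin m) (Fin m) ℝ) + b • C
      = U * diagonal (fun i => a + b * μ i) * star U := by
    have h1 : a • (1 : Matrix (Fin m) (Fin m) ℝ) = U * (a • (1 : Matrix (Fin m) (Fin m) ℝ)) * star U := by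
      rw [Matrix.mul_smul, Matrix.smul_mul, mul_one, hUU]
    have hdiag : a • (1 : Matrix (Fin m) (Fin m) ℝ) + b • diagonal μ
        = diagonal (fun i => a + b * μ i) := by
      rw [← diagonal_one, ← diagonal_smul, ← diagonal_smul, diagonal_add]
      funext i
      simp [mul_comm]
    have h2 : b • C = U * (b • diagonal μ) * star U := by
      rw [Matrix.mul_smul, Matrix.smul_mul, ← hspec]
    rw [← hdiag, mul_add, add_mul, ← h1, ← h2]
  have hUdet : U.det * (star U).det = 1 := by
    have := congrArg Matrix.det hUU
    rwa [det_mul, det_one] at this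
  have hdet_inner : (a • (1 : Matrix (Fin m) (Fin m) ℝ) + b • C).det = ∏ i, (a + b * μ i) := by
    rw [hinner, det_mul, det_mul, det_diagonal]
    calc U.det * (∏ i, (a + b * μ i)) * (star U).det
        = (U.det * (star U).det) * ∏ i, (a + b * μ i) := by ring
      _ = ∏ i, (a + b * μ i) := by rw [hUdet, one_mul]
  have habpos : ∀ i, 0 < a + b * μ i := by
    intro i
    rcases hb.lt_or_eq with h | h
    · have := mul_pos h (hμpos i)
      linarith
    · rw [← h] at hab ⊢
      simpa using by linarith [hab]
  -- the log inequality pointwise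
  have hlogpt : ∀ i, b * Real.log (μ i) ≤ Real.log (a + b * μ i) := by
    intro i
    have := strictConcaveOn_log_Ioi.concaveOn.2 (Set.mem_Ioi.mpr one_pos)
      (Set.mem_Ioi.mpr (hμpos i)) ha hb hab
    simpa using this
  -- assemble
  have hdetfull : (a • M + b • N).det = S.det * (∏ i, (a + b * μ i)) * S.det := by
    rw [hfact, det_mul, det_mul, hdet_inner]
  have hprodpos : 0 < ∏ i, (a + b * μ i) :=
    Finset.prod_pos fun i _ => habpos i
  have hlog1 : Real.log (a • M + b • N).det
      = Real.log S.det + (∑ i, Real.log (a + b * μ i)) + Real.log S.det := by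
    rw [hdetfull, Real.log_mul (by positivity) hdS, Real.log_mul hdS hprodpos.ne',
      Real.log_prod (fun i _ => (habpos i).ne')]
  have hlogM : Real.log M.det = 2 * Real.log S.det := by
    rw [← hdetS2, Real.log_mul hdS hdS]; ring
  have hlogC : Real.log C.det = Real.log N.det - 2 * Real.log S.det := by
    rw [hdetC, Real.log_mul (by simp [hdS, hdetN.ne']) (by simp [hdS]), Real.log_mul (by simp [hdS]) hdetN.ne',
      Real.log_inv]
    ring
  have hlogCsum : Real.log C.det = ∑ i, Real.log (μ i) := by
    rw [hμprod, Real.log_prod (fun i _ => (hμpos i).ne')]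
  have hsum : b * Real.log C.det ≤ ∑ i, Real.log (a + b * μ i) := by
    rw [hlogCsum, Finset.mul_sum]
    exact Finset.sum_le_sum fun i _ => hlogpt i
  rw [hlog1, hlogM]
  rw [hlogC] at hsum
  have ha' : a = 1 - b := by linarith
  have hrw : a * (2 * Real.log S.det) + b * Real.log N.det
      = 2 * Real.log S.det + b * (Real.log N.det - 2 * Real.log S.det) := by
    rw [ha']; ring
  rw [hrw]
  linarith [hsum]

lemma smul_one_posDef {c : ℝ} (hc : 0 < c) :
    (c • (1 : Matrix (Fin m) (Fin m) ℝ)).PosDef := by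
  have : c • (1 : Matrix (Fin m) (Fin m) ℝ) = diagonal (fun _ => c) := by
    ext i j
    by_cases h : i = j <;> simp [h, Matrix.one_apply, Matrix.diagonal_apply]
  rw [this]
  exact posDef_diagonal_iff.mpr fun _ => hc

/-- For `λ ≥ 1`, `σ² > 0` and `Σ_YY` positive definite, the attack cost function
`f(Σ_AA) = −(λ−1) log det(Σ_YY + Σ_AA) − log det(Σ_AA + σ²I) + λ tr(Σ_YY⁻¹ Σ_AA)`
is convex on the set of positive semidefinite matrices. -/
theorem cost_function_convexOn (m : ℕ) (l : ℝ) (hl : 1 ≤ l) (σ2 : ℝ) (hσ2 : 0 < σ2)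
    (Syy : Matrix (Fin m) (Fin m) ℝ) (hSyy : Syy.PosDef) :
    ConvexOn ℝ {A : Matrix (Fin m) (Fin m) ℝ | A.PosSemidef}
      (fun A : Matrix (Fin m) (Fin m) ℝ =>
        -(l - 1) * Real.log (Syy + A).det
          - Real.log (A + σ2 • (1 : Matrix (Fin m) (Fin m) ℝ)).det
          + l * (Syy⁻¹ * A).trace) := by
  constructor
  · intro A hA B hB a b ha hb hab
    exact (psd_smul hA ha).add (psd_smul hB hb)
  · intro A hA B hB a b ha hb hab
    simp only [Set.mem_setOf_eq] at hA hB
    simp only [smul_eq_mul]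
    have hSA : (Syy + A).PosDef := hSyy.add_posSemidef hA
    have hSB : (Syy + B).PosDef := hSyy.add_posSemidef hB
    have hI : (σ2 • (1 : Matrix (Fin m) (Fin m) ℝ)).PosDef := smul_one_posDef hσ2
    have hIA : (A + σ2 • (1 : Matrix (Fin m) (Fin m) ℝ)).PosDef := by
      rw [add_comm]; exact hI.add_posSemidef hA
    have hIB : (B + σ2 • (1 : Matrix (Fin m) (Fin m) ℝ)).PosDef := by
      rw [add_comm]; exact hI.add_posSemidef hB
    -- first log term
    have e1 : Syy + (a • A + b • B) = a • (Syy + A) + b • (Syy + B) := by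
      rw [smul_add, smul_add, add_add_add_comm, ← add_smul, hab, one_smul]
    have h1 : a * Real.log (Syy + A).det + b * Real.log (Syy + B).det
        ≤ Real.log (Syy + (a • A + b • B)).det := by
      rw [e1]; exact logdet_key hSA hSB ha hb hab
    -- second log term
    have e2 : (a • A + b • B) + σ2 • (1 : Matrix (Fin m) (Fin m) ℝ)
        = a • (A + σ2 • (1 : Matrix (Fin m) (Fin m) ℝ))
          + b • (B + σ2 • (1 : Matrix (Fin m) (Fin m) ℝ)) := by
      rw [smul_add, smul_add, add_add_add_comm, ← add_smul, hab, one_smul]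
    have h2 : a * Real.log (A + σ2 • (1 : Matrix (Fin m) (Fin m) ℝ)).det
          + b * Real.log (B + σ2 • (1 : Matrix (Fin m) (Fin m) ℝ)).det
        ≤ Real.log ((a • A + b • B) + σ2 • (1 : Matrix (Fin m) (Fin m) ℝ)).det := by
      rw [e2]; exact logdet_key hIA hIB ha hb hab
    -- trace term
    have h3 : (Syy⁻¹ * (a • A + b • B)).trace
        = a * (Syy⁻¹ * A).trace + b * (Syy⁻¹ * B).trace := by
      rw [Matrix.mul_add, Matrix.mul_smul, Matrix.mul_smul, trace_add, trace_smul, trace_smul]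
      simp
    rw [h3]
    have hl1 : (0:ℝ) ≤ l - 1 := by linarith
    nlinarith [mul_le_mul_of_nonneg_left h1 hl1, h2]
end

section
/- Let H ∈ ℝ^{m×n}, let Σ_XX ∈ ℝ^{n×n} be positive semidefinite, and let σ² > 0. Then the function g(λ) = det( H Σ_XX Hᵀ (σ²I_m + (1/λ) H Σ_XX Hᵀ)⁻¹ + I_m ) is monotone nondecreasing in λ on (0, ∞); consequently the mutual information (1/2) log g(λ) induced by the optimal generalized stealth attack increases monotonically with the weighting parameter λ. -/
open Matrix

/-- For `Σ_XX ⪰ 0` and `σ² > 0`, the function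
`g(λ) = det(H Σ_XX Hᵀ (σ²I + (1/λ) H Σ_XX Hᵀ)⁻¹ + I)` is monotone nondecreasing on `(0, ∞)`;
consequently the mutual information `(1/2) log g(λ)` induced by the optimal generalized
stealth attack increases monotonically with the weighting parameter `λ`. -/
theorem mutualInformation_monotone (m n : ℕ)
    (H : Matrix (Fin m) (Fin n) ℝ) (Sxx : Matrix (Fin n) (Fin n) ℝ)
    (hSxx : Sxx.PosSemidef) (σ2 : ℝ) (hσ2 : 0 < σ2) :
    MonotoneOn (fun l : ℝ =>
        ((H * Sxx * Hᵀ) * (σ2 • (1 : Matrix (Fin m) (Fin m) ℝ)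
            + l⁻¹ • (H * Sxx * Hᵀ))⁻¹ + 1).det)
      (Set.Ioi (0 : ℝ)) ∧
    MonotoneOn (fun l : ℝ =>
        1 / 2 * Real.log (((H * Sxx * Hᵀ) * (σ2 • (1 : Matrix (Fin m) (Fin m) ℝ)
            + l⁻¹ • (H * Sxx * Hᵀ))⁻¹ + 1).det))
      (Set.Ioi (0 : ℝ)) := by
  set M : Matrix (Fin m) (Fin m) ℝ := H * Sxx * Hᵀ with hMdef
  have hM : M.PosSemidef := by
    have := hSxx.mul_mul_conjTranspose_same H
    simpa [Matrix.conjTranspose_eq_transpose_of_trivial, hMdef] using this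
  have hHerm : M.IsHermitian := hM.1
  set μ : Fin m → ℝ := hHerm.eigenvalues with hμdef
  have hμ : ∀ i, 0 ≤ μ i := hM.eigenvalues_nonneg
  set U : Matrix (Fin m) (Fin m) ℝ := (hHerm.eigenvectorUnitary : Matrix (Fin m) (Fin m) ℝ)
    with hUdef
  have hU : U * star U = 1 := Matrix.mem_unitaryGroup_iff.mp hHerm.eigenvectorUnitary.2
  have hspec : M = U * diagonal μ * star U := by
    have := hHerm.spectral_theorem
    simpa [hUdef, hμdef] using this
  -- determinant formula
  have hdet : ∀ t : ℝ, (σ2 • (1 : Matrix (Fin m) (Fin m) ℝ) + t • M).det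
      = ∏ i, (σ2 + t * μ i) := by
    intro t
    have h1 : σ2 • (1 : Matrix (Fin m) (Fin m) ℝ) + t • M
        = U * diagonal (fun i => σ2 + t * μ i) * star U := by
      have hd : diagonal (fun i => σ2 + t * μ i)
          = σ2 • (1 : Matrix (Fin m) (Fin m) ℝ) + t • diagonal μ := by
        rw [← Matrix.diagonal_one, ← Matrix.diagonal_smul, ← Matrix.diagonal_smul,
          Matrix.diagonal_add]
        congr 1
        funext i
        simp
      rw [hd, Matrix.mul_add, Matrix.add_mul, Matrix.mul_smul, Matrix.smul_mul,
        Matrix.mul_smul, Matrix.smul_mul, Matrix.mul_one, hU, ← hspec]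
    have hUdet : U.det * (star U).det = 1 := by
      rw [← Matrix.det_mul, hU, Matrix.det_one]
    rw [h1, Matrix.det_mul, Matrix.det_mul, Matrix.det_diagonal, mul_comm U.det,
      mul_assoc, hUdet, mul_one]
  -- positive definiteness
  have hpos : ∀ t : ℝ, 0 ≤ t → (σ2 • (1 : Matrix (Fin m) (Fin m) ℝ) + t • M).PosDef := by
    intro t ht
    have h1 : (σ2 • (1 : Matrix (Fin m) (Fin m) ℝ)).PosDef := by
      rw [← Matrix.diagonal_one, ← Matrix.diagonal_smul]
      exact Matrix.PosDef.diagonal fun i => by simpa using hσ2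
    have h2 : (t • M).PosSemidef := by
      refine ⟨?_, fun x => ?_⟩
      · show (t • M)ᴴ = t • M
        rw [Matrix.conjTranspose_smul, hHerm.eq]
        simp
      · exact (hM.smul ht).2 x
    exact h1.add_posSemidef h2
  -- the key evaluation on (0, ∞)
  have key : ∀ l : ℝ, l ∈ Set.Ioi (0 : ℝ) →
      ((M * (σ2 • (1 : Matrix (Fin m) (Fin m) ℝ) + l⁻¹ • M)⁻¹ + 1).det
        = ∏ i, (σ2 + (1 + l⁻¹) * μ i) / (σ2 + l⁻¹ * μ i)) := by
    intro l hl
    have hl' : (0 : ℝ) < l := hl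
    have hinv : (0 : ℝ) ≤ l⁻¹ := (inv_pos.mpr hl').le
    set P : Matrix (Fin m) (Fin m) ℝ := σ2 • (1 : Matrix (Fin m) (Fin m) ℝ) + l⁻¹ • M with hPdef
    have hP : P.PosDef := hpos _ hinv
    have hPunit : IsUnit P.det := hP.det_pos.ne'.isUnit
    have hPinv : P * P⁻¹ = 1 := Matrix.mul_nonsing_inv P hPunit
    have h2 : M * P⁻¹ + 1 = (M + P) * P⁻¹ := by
      rw [Matrix.add_mul, hPinv]
    have h3 : M + P = σ2 • (1 : Matrix (Fin m) (Fin m) ℝ) + (1 + l⁻¹) • M := by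
      rw [hPdef, add_smul, one_smul]
      abel
    have h4 : (P⁻¹).det = (P.det)⁻¹ := by
      rw [Matrix.det_nonsing_inv, Ring.inverse_eq_inv']
    rw [h2, Matrix.det_mul, h4, h3, hdet, hdet, Finset.prod_div_distrib, div_eq_mul_inv]
  -- positivity and monotonicity of the product
  have hden : ∀ (l : ℝ), 0 < l → ∀ i, 0 < σ2 + l⁻¹ * μ i := fun l hl i =>
    add_pos_of_pos_of_nonneg hσ2 (mul_nonneg (inv_pos.mpr hl).le (hμ i))
  have hnum : ∀ (l : ℝ), 0 < l → ∀ i, 0 < σ2 + (1 + l⁻¹) * μ i := fun l hl i =>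
    add_pos_of_pos_of_nonneg hσ2
      (mul_nonneg (by positivity) (hμ i))
  have mono : ∀ a ∈ Set.Ioi (0:ℝ), ∀ b ∈ Set.Ioi (0:ℝ), a ≤ b →
      (∏ i, (σ2 + (1 + a⁻¹) * μ i) / (σ2 + a⁻¹ * μ i))
        ≤ ∏ i, (σ2 + (1 + b⁻¹) * μ i) / (σ2 + b⁻¹ * μ i) := by
    intro a ha b hb hab
    have ha' : (0:ℝ) < a := ha
    have hb' : (0:ℝ) < b := hb
    have hba : b⁻¹ ≤ a⁻¹ := inv_anti₀ ha' hab
    refine Finset.prod_le_prod (fun i _ => ?_) (fun i _ => ?_)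
    · exact div_nonneg (hnum a ha' i).le (hden a ha' i).le
    · rw [div_le_div_iff₀ (hden a ha' i) (hden b hb' i)]
      nlinarith [mul_nonneg (mul_nonneg (hμ i) (hμ i)) (sub_nonneg.mpr hba), hμ i,
        mul_nonneg (hμ i) (sub_nonneg.mpr hba)]
  have m1 : MonotoneOn (fun l : ℝ =>
      ((M * (σ2 • (1 : Matrix (Fin m) (Fin m) ℝ) + l⁻¹ • M)⁻¹ + 1).det))
      (Set.Ioi (0 : ℝ)) := by
    intro a ha b hb hab
    simp only
    rw [key a ha, key b hb]
    exact mono a ha b hb hab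
  refine ⟨m1, ?_⟩
  intro a ha b hb hab
  have hga : 0 < ((M * (σ2 • (1 : Matrix (Fin m) (Fin m) ℝ) + a⁻¹ • M)⁻¹ + 1).det) := by
    rw [key a ha]
    exact Finset.prod_pos fun i _ =>
      div_pos (hnum a ha i) (hden a ha i)
  have hlog := Real.log_le_log hga (m1 ha hb hab)
  simp only
  linarith
end

section
/- Let H ∈ ℝ^{m×n}, Σ_XX ∈ ℝ^{n×n} positive semidefinite, σ² > 0, λ ≥ 1, and τ > 0. Set Σ_YY = H Σ_XX Hᵀ + σ²I_m and Σ_YAYA = Σ_YY + (1/λ) H Σ_XX Hᵀ. Let p = rank(H Σ_XX Hᵀ), let μ₁ ≥ ··· ≥ μ_p > 0 be the positive eigenvalues of H Σ_XX Hᵀ, and let Δ ∈ ℝ^{p×p} be the diagonal matrix with entries Δ_{ii} = μ_i / (μ_i + σ²). Then the probability, under Y_A ~ N(0, Σ_YAYA), of the event { y : f_YA(y)/f_Y(y) ≥ τ } equals the probability, under U ~ N(0, I_p), of the event { u : uᵀ Δ u ≥ λ ( 2 log τ + log det( I_p + λ⁻¹ Δ ) ) }, where f_Y and f_YA are the densities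 of N(0, Σ_YY) and N(0, Σ_YAYA). -/
open MeasureTheory Matrix

/-- Density of the centered multivariate Gaussian `N(0, S)` on `ι → ℝ`. -/
noncomputable def gaussianPdf {ι : Type*} [Fintype ι] [DecidableEq ι]
    (S : Matrix ι ι ℝ) (y : ι → ℝ) : ℝ :=
  (1 / Real.sqrt ((2 * Real.pi) ^ Fintype.card ι * S.det)) *
    Real.exp (-(1 / 2) * (y ⬝ᵥ (S⁻¹ *ᵥ y)))

/-- The centered multivariate Gaussian measure `N(0, S)` on `ι → ℝ`. -/
noncomputable def gaussianMeasure {ι : Type*} [Fintype ι] [DecidableEq ι]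
    (S : Matrix ι ι ℝ) : Measure (ι → ℝ) :=
  MeasureTheory.volume.withDensity fun y => ENNReal.ofReal (gaussianPdf S y)

section Aux
open ProbabilityTheory

variable {ι : Type*} [Fintype ι] [DecidableEq ι]

lemma aux_measurable_quadForm (M : Matrix ι ι ℝ) :
    Measurable fun y : ι → ℝ => y ⬝ᵥ (M *ᵥ y) := by
  apply Finset.measurable_sum
  intro i _
  exact ((measurable_pi_apply i).mul (Finset.measurable_sum _ fun j _ =>
    (by fun_prop)))

lemma aux_measurable_gaussianPdf (S : Matrix ι ι ℝ) : Measurable (gaussianPdf S) := by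
  unfold gaussianPdf
  exact ((aux_measurable_quadForm S⁻¹).const_mul (-(1/2))).exp.const_mul _

lemma aux_dotProduct_diagonal (c w : ι → ℝ) :
    w ⬝ᵥ (Matrix.diagonal c *ᵥ w) = ∑ j, c j * w j ^ 2 := by
  unfold dotProduct
  refine Finset.sum_congr rfl fun j _ => ?_
  rw [Matrix.mulVec_diagonal]
  ring

open scoped ENNReal in
lemma aux_lintegral_pi_prod : ∀ {k : ℕ} (f : Fin k → ℝ → ℝ≥0∞), (∀ i, Measurable (f i)) →
    ∫⁻ y : Fin k → ℝ, ∏ i, f i (y i) ∂(Measure.pi fun _ => (volume : Measure ℝ))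
      = ∏ i, ∫⁻ x, f i x := by
  intro k
  induction k with
  | zero => intro f hf; simp
  | succ n ih =>
    intro f hf
    have h := (measurePreserving_piFinSuccAbove (fun _ : Fin (n+1) => (volume : Measure ℝ)) 0).symm
    have hmeas : Measurable fun y : Fin (n+1) → ℝ => ∏ i, f i (y i) :=
      Finset.measurable_prod _ fun i _ => (hf i).comp (measurable_pi_apply i)
    rw [← h.lintegral_comp hmeas]
    have hcomp : ∀ z : ℝ × (Fin n → ℝ),
        (∏ i, f i (((MeasurableEquiv.piFinSuccAbove (fun _ => ℝ) 0).symm z) i))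
          = f 0 z.1 * ∏ i : Fin n, f i.succ (z.2 i) := by
      intro z
      rw [MeasurableEquiv.piFinSuccAbove_symm_apply]
      simp only [Fin.insertNthEquiv, Equiv.coe_fn_mk, Fin.insertNth_zero]
      rw [Fin.prod_univ_succ]
      simp [Fin.cons_zero, Fin.cons_succ]
    simp_rw [hcomp]
    rw [lintegral_prod_mul (f := f 0) (g := fun b : Fin n → ℝ => ∏ i, f i.succ (b i))
      (hf 0).aemeasurable
      ((Finset.measurable_prod _ fun i _ => (hf i.succ).comp (measurable_pi_apply i)).aemeasurable)]
    rw [ih _ fun i => hf i.succ, Fin.prod_univ_succ]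

lemma aux_gaussianMeasure_one_eq_pi (k : ℕ) :
    gaussianMeasure (1 : Matrix (Fin k) (Fin k) ℝ)
      = Measure.pi (fun _ : Fin k => gaussianReal 0 1) := by
  symm
  apply Measure.pi_eq
  intro s hs
  have hpdf : ∀ y : Fin k → ℝ,
      ENNReal.ofReal (gaussianPdf 1 y) = ∏ i, gaussianPDF 0 1 (y i) := by
    intro y
    have h2π : (0:ℝ) ≤ 2 * Real.pi := by positivity
    have hsq : Real.sqrt ((2 * Real.pi) ^ k) = (Real.sqrt (2 * Real.pi)) ^ k := by
      have h1 : ((Real.sqrt (2 * Real.pi)) ^ k) ^ 2 = (2 * Real.pi) ^ k := by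
        rw [← pow_mul, mul_comm k 2, pow_mul, Real.sq_sqrt h2π]
      rw [← h1, Real.sqrt_sq (by positivity)]
    have : gaussianPdf (1 : Matrix (Fin k) (Fin k) ℝ) y
        = ∏ i, gaussianPDFReal 0 1 (y i) := by
      unfold gaussianPdf gaussianPDFReal
      rw [Matrix.det_one, inv_one, Matrix.one_mulVec, mul_one]
      simp only [NNReal.coe_one, mul_one, sub_zero]
      rw [Finset.prod_mul_distrib, Finset.prod_const, ← Real.exp_sum]
      rw [Fintype.card_fin, hsq]
      congr 1
      · rw [one_div, Finset.card_univ, Fintype.card_fin, ← inv_pow]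
      · congr 1
        unfold dotProduct
        rw [Finset.mul_sum]
        congr 1; funext i; ring
    rw [this, ENNReal.ofReal_prod_of_nonneg fun i _ => gaussianPDFReal_nonneg 0 1 (y i)]
    rfl
  rw [gaussianMeasure, withDensity_apply _ (MeasurableSet.univ_pi hs)]
  have hrw : ∀ y : Fin k → ℝ, Set.indicator (Set.univ.pi s)
      (fun y => ENNReal.ofReal (gaussianPdf 1 y)) y
      = ∏ i, Set.indicator (s i) (gaussianPDF 0 1) (y i) := by
    intro y
    by_cases hy : y ∈ Set.univ.pi s
    · rw [Set.indicator_of_mem hy, hpdf]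
      exact Finset.prod_congr rfl fun i _ =>
        (Set.indicator_of_mem (hy i (Set.mem_univ i)) _).symm
    · rw [Set.indicator_of_notMem hy]
      rw [Set.mem_univ_pi] at hy
      push_neg at hy
      obtain ⟨i, hi⟩ := hy
      exact (Finset.prod_eq_zero (Finset.mem_univ i)
        (Set.indicator_of_notMem hi _)).symm
  rw [← lintegral_indicator (MeasurableSet.univ_pi hs)]
  simp_rw [hrw]
  rw [MeasureTheory.volume_pi,
    aux_lintegral_pi_prod _ fun i => (measurable_gaussianPDF 0 1).indicator (hs i)]
  refine Finset.prod_congr rfl fun i _ => ?_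
  rw [lintegral_indicator (hs i), gaussianReal_of_var_ne_zero 0 one_ne_zero,
    withDensity_apply _ (hs i)]

lemma aux_gaussianPdf_mul_transpose (T : Matrix ι ι ℝ) (hT : T.det ≠ 0) (y : ι → ℝ) :
    gaussianPdf (T * Tᵀ) y = |T.det|⁻¹ * gaussianPdf 1 (T⁻¹ *ᵥ y) := by
  have hdet : (T * Tᵀ).det = T.det ^ 2 := by
    rw [Matrix.det_mul, Matrix.det_transpose, sq]
  unfold gaussianPdf
  rw [Matrix.det_one, inv_one, Matrix.one_mulVec, mul_one, hdet]
  have hquad : y ⬝ᵥ ((T * Tᵀ)⁻¹ *ᵥ y) = (T⁻¹ *ᵥ y) ⬝ᵥ (T⁻¹ *ᵥ y) := by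
    rw [Matrix.mul_inv_rev, ← Matrix.transpose_nonsing_inv]
    rw [← Matrix.mulVec_mulVec, Matrix.dotProduct_mulVec y ((T⁻¹)ᵀ) _,
      Matrix.vecMul_transpose]
  rw [hquad]
  have hpos : (0:ℝ) ≤ (2 * Real.pi) ^ Fintype.card ι := by positivity
  have : Real.sqrt ((2 * Real.pi) ^ Fintype.card ι * T.det ^ 2)
      = Real.sqrt ((2 * Real.pi) ^ Fintype.card ι) * |T.det| := by
    rw [Real.sqrt_mul hpos, Real.sqrt_sq_eq_abs]
  rw [this]
  have habs : |T.det| ≠ 0 := abs_ne_zero.mpr hT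
  field_simp

lemma aux_measurable_mulVec (M : Matrix ι ι ℝ) : Measurable fun y : ι → ℝ => M *ᵥ y :=
  measurable_pi_lambda _ fun i => Finset.measurable_sum _ fun j _ =>
    (by fun_prop)

lemma aux_gaussianMeasure_mul_transpose (T : Matrix ι ι ℝ) (hT : T.det ≠ 0) :
    gaussianMeasure (T * Tᵀ) = Measure.map (Matrix.toLin' T) (gaussianMeasure 1) := by
  have hTmeas : Measurable (Matrix.toLin' T) :=
    (LinearMap.continuous_on_pi _).measurable
  ext A hA
  rw [Measure.map_apply hTmeas hA, gaussianMeasure, gaussianMeasure,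
    withDensity_apply _ hA, withDensity_apply _ (hTmeas hA)]
  have hvol : Measure.map (⇑(Matrix.toLin' T)) volume
      = ENNReal.ofReal |T.det⁻¹| • (volume : Measure (ι → ℝ)) :=
    Real.map_matrix_volume_pi_eq_smul_volume_pi hT
  have hg : Measurable fun y => ENNReal.ofReal (gaussianPdf 1 (T⁻¹ *ᵥ y)) := by
    apply Measurable.ennreal_ofReal
    exact (aux_measurable_gaussianPdf 1).comp (aux_measurable_mulVec T⁻¹)
  symm
  have hTinv : ∀ x : ι → ℝ, T⁻¹ *ᵥ (T *ᵥ x) = x := by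
    intro x
    rw [Matrix.mulVec_mulVec, Matrix.nonsing_inv_mul _ (isUnit_iff_ne_zero.mpr hT),
      Matrix.one_mulVec]
  calc ∫⁻ x in (⇑(Matrix.toLin' T)) ⁻¹' A, ENNReal.ofReal (gaussianPdf 1 x) ∂volume
      = ∫⁻ x in (⇑(Matrix.toLin' T)) ⁻¹' A,
          ENNReal.ofReal (gaussianPdf 1 (T⁻¹ *ᵥ (Matrix.toLin' T x))) ∂volume := by
        refine lintegral_congr fun x => ?_
        rw [Matrix.toLin'_apply, hTinv]
    _ = ∫⁻ y in A, ENNReal.ofReal (gaussianPdf 1 (T⁻¹ *ᵥ y))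
          ∂(Measure.map (⇑(Matrix.toLin' T)) volume) := by
        rw [setLIntegral_map hA hg hTmeas]
    _ = ENNReal.ofReal |T.det⁻¹| * ∫⁻ y in A, ENNReal.ofReal (gaussianPdf 1 (T⁻¹ *ᵥ y)) ∂volume := by
        rw [hvol]
        simp [Measure.restrict_smul, lintegral_smul_measure]
    _ = ∫⁻ y in A, ENNReal.ofReal (gaussianPdf (T * Tᵀ) y) ∂volume := by
        rw [← lintegral_const_mul _ hg]
        refine lintegral_congr fun y => ?_
        rw [aux_gaussianPdf_mul_transpose T hT y, ENNReal.ofReal_mul (by positivity), abs_inv]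

lemma aux_map_proj_pi {m p : ℕ} (g : Fin p → Fin m) (hg : Function.Injective g) :
    Measure.map (fun w : Fin m → ℝ => w ∘ g)
      (Measure.pi fun _ : Fin m => gaussianReal 0 1)
      = Measure.pi (fun _ : Fin p => gaussianReal 0 1) := by
  classical
  let s : Set (Fin m) := Set.range g
  let e : (Fin p ⊕ ↥sᶜ) ≃ Fin m :=
    ((Equiv.ofInjective g hg).sumCongr (Equiv.refl ↥sᶜ)).trans (Equiv.Set.sumCompl s)
  have mp1 := measurePreserving_piCongrLeft (fun _ : Fin m => gaussianReal 0 1) e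
  have mp2 := measurePreserving_sumPiEquivProdPi
    (fun _ : Fin p ⊕ ↥sᶜ => (gaussianReal 0 1 : Measure ℝ))
  have hproj : Measurable fun w : Fin m → ℝ => w ∘ g :=
    measurable_pi_lambda _ fun i => measurable_pi_apply (g i)
  have key : (fun w : Fin m → ℝ => w ∘ g) ∘ (⇑(MeasurableEquiv.piCongrLeft (fun _ : Fin m => ℝ) e))
      = Prod.fst ∘ ⇑(MeasurableEquiv.sumPiEquivProdPi (fun _ : Fin p ⊕ ↥sᶜ => ℝ)) := by
    funext x
    funext i
    have h1 : e (Sum.inl i) = g i := rfl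
    simp only [Function.comp_apply, MeasurableEquiv.coe_piCongrLeft]
    have := Equiv.piCongrLeft_apply_apply (fun _ : Fin m => ℝ) e x (Sum.inl i)
    rw [h1] at this
    rw [this]
    rfl
  calc Measure.map (fun w : Fin m → ℝ => w ∘ g) (Measure.pi fun _ : Fin m => gaussianReal 0 1)
      = Measure.map (fun w : Fin m → ℝ => w ∘ g)
          (Measure.map (⇑(MeasurableEquiv.piCongrLeft (fun _ : Fin m => ℝ) e))
            (Measure.pi fun _ : Fin p ⊕ ↥sᶜ => gaussianReal 0 1)) := by rw [mp1.map_eq]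
    _ = Measure.map ((fun w : Fin m → ℝ => w ∘ g) ∘ (⇑(MeasurableEquiv.piCongrLeft (fun _ : Fin m => ℝ) e)))
          (Measure.pi fun _ : Fin p ⊕ ↥sᶜ => gaussianReal 0 1) := by
        rw [Measure.map_map hproj (MeasurableEquiv.measurable _)]
    _ = Measure.map (Prod.fst ∘ ⇑(MeasurableEquiv.sumPiEquivProdPi (fun _ : Fin p ⊕ ↥sᶜ => ℝ)))
          (Measure.pi fun _ : Fin p ⊕ ↥sᶜ => gaussianReal 0 1) := by rw [key]
    _ = Measure.map Prod.fst (Measure.map (⇑(MeasurableEquiv.sumPiEquivProdPi (fun _ : Fin p ⊕ ↥sᶜ => ℝ)))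
          (Measure.pi fun _ : Fin p ⊕ ↥sᶜ => gaussianReal 0 1)) := by
        rw [Measure.map_map measurable_fst (MeasurableEquiv.measurable _)]
    _ = Measure.map Prod.fst ((Measure.pi fun _ : Fin p => (gaussianReal 0 1 : Measure ℝ)).prod
          (Measure.pi fun _ : ↥sᶜ => (gaussianReal 0 1 : Measure ℝ))) := by rw [mp2.map_eq]
    _ = Measure.pi fun _ : Fin p => gaussianReal 0 1 := by
        rw [Measure.map_fst_prod]
        simp

end Aux


/-- Lemma 1: the probability, under the attacked measurement distribution
`N(0, Σ_YAYA)` with `Σ_YAYA = H Σ_XX Hᵀ + σ²I + (1/λ) H Σ_XX Hᵀ`, that the likelihood ratio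
against `N(0, Σ_YY)`, `Σ_YY = H Σ_XX Hᵀ + σ²I`, exceeds `τ` equals the probability, under a
standard Gaussian `U ~ N(0, I_p)` with `p = rank(H Σ_XX Hᵀ)`, that
`Uᵀ Δ U ≥ λ (2 log τ + log det(I_p + λ⁻¹ Δ))`, where `Δ` is diagonal with entries
`μ_i/(μ_i + σ²)` and `μ₁ ≥ ⋯ ≥ μ_p > 0` are the positive eigenvalues of `H Σ_XX Hᵀ`. -/
theorem prob_detection_eq (m n : ℕ)
    (H : Matrix (Fin m) (Fin n) ℝ) (Sxx : Matrix (Fin n) (Fin n) ℝ)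
    (hSxx : Sxx.PosSemidef) (σ2 : ℝ) (hσ2 : 0 < σ2) (l : ℝ) (hl : 1 ≤ l)
    (τ : ℝ) (hτ : 0 < τ)
    (p : ℕ) (μ : Fin p → ℝ) (hμpos : ∀ i, 0 < μ i) (hμdesc : Antitone μ)
    (hp : p = (H * Sxx * Hᵀ).rank)
    (hB : (H * Sxx * Hᵀ).IsHermitian)
    (g : Fin p → Fin m) (hg : Function.Injective g)
    (hgval : ∀ i, hB.eigenvalues (g i) = μ i)
    (hgzero : ∀ j, j ∉ Set.range g → hB.eigenvalues j = 0) :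
    gaussianMeasure (H * Sxx * Hᵀ + σ2 • (1 : Matrix (Fin m) (Fin m) ℝ)
        + l⁻¹ • (H * Sxx * Hᵀ))
      {y : Fin m → ℝ |
        τ ≤ gaussianPdf (H * Sxx * Hᵀ + σ2 • (1 : Matrix (Fin m) (Fin m) ℝ)
              + l⁻¹ • (H * Sxx * Hᵀ)) y
            / gaussianPdf (H * Sxx * Hᵀ + σ2 • (1 : Matrix (Fin m) (Fin m) ℝ)) y}
      = gaussianMeasure (1 : Matrix (Fin p) (Fin p) ℝ)
          {u : Fin p → ℝ |
            l * (2 * Real.log τ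
                + Real.log (1 + l⁻¹ • Matrix.diagonal (fun i => μ i / (μ i + σ2))).det)
              ≤ u ⬝ᵥ (Matrix.diagonal (fun i => μ i / (μ i + σ2)) *ᵥ u)} := by
  classical
  have hl0 : (0:ℝ) < l := lt_of_lt_of_le one_pos hl
  have hlinv : (0:ℝ) ≤ l⁻¹ := inv_nonneg.mpr hl0.le
  set B : Matrix (Fin m) (Fin m) ℝ := H * Sxx * Hᵀ with hBdef
  have hBpsd : B.PosSemidef := by
    have h := hSxx.mul_mul_conjTranspose_same H
    rwa [Matrix.conjTranspose_eq_transpose_of_trivial] at h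
  set d : Fin m → ℝ := hB.eigenvalues with hd
  have hd0 : ∀ j, 0 ≤ d j := fun j => hBpsd.eigenvalues_nonneg j
  set Q : Matrix (Fin m) (Fin m) ℝ := ↑(hB.eigenvectorUnitary) with hQdef
  have hQmem := hB.eigenvectorUnitary.2
  rw [Unitary.mem_iff] at hQmem
  have hstar : star Q = Qᵀ := by
    rw [Matrix.star_eq_conjTranspose, Matrix.conjTranspose_eq_transpose_of_trivial]
  have hQ1 : Qᵀ * Q = 1 := by rw [← hstar]; exact hQmem.1
  have hQ2 : Q * Qᵀ = 1 := by rw [← hstar]; exact hQmem.2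
  have hBspec : B = Q * Matrix.diagonal d * Qᵀ := by
    have h := hB.spectral_theorem
    rw [Unitary.conjStarAlgAut_apply, ← hQdef, hstar] at h
    have h2 : (RCLike.ofReal ∘ d : Fin m → ℝ) = d := by
      rw [RCLike.ofReal_real_eq_id, Function.id_comp]
    rw [h, h2]
  set sY : Fin m → ℝ := fun j => d j + σ2 with hsYdef
  set sA : Fin m → ℝ := fun j => d j + σ2 + l⁻¹ * d j with hsAdef
  have hsY : ∀ j, 0 < sY j := fun j => add_pos_of_nonneg_of_pos (hd0 j) hσ2
  have hsA : ∀ j, 0 < sA j := fun j =>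
    add_pos_of_pos_of_nonneg (hsY j) (mul_nonneg hlinv (hd0 j))
  have hQcancel : ∀ X : Matrix (Fin m) (Fin m) ℝ, Qᵀ * (Q * X) = X := by
    intro X; rw [← Matrix.mul_assoc, hQ1, Matrix.one_mul]
  have sandwich : ∀ v w : Fin m → ℝ, (Q * Matrix.diagonal v * Qᵀ) * (Q * Matrix.diagonal w * Qᵀ)
      = Q * Matrix.diagonal (fun j => v j * w j) * Qᵀ := by
    intro v w
    simp only [Matrix.mul_assoc]
    rw [hQcancel, ← Matrix.mul_assoc (Matrix.diagonal v), Matrix.diagonal_mul_diagonal]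
  have hinv : ∀ v : Fin m → ℝ, (∀ j, v j ≠ 0) →
      (Q * Matrix.diagonal v * Qᵀ)⁻¹ = Q * Matrix.diagonal (fun j => (v j)⁻¹) * Qᵀ := by
    intro v hv
    apply Matrix.inv_eq_right_inv
    rw [sandwich]
    have h1 : (fun j => v j * (v j)⁻¹) = fun _ : Fin m => (1:ℝ) :=
      funext fun j => mul_inv_cancel₀ (hv j)
    rw [h1, Matrix.diagonal_one, Matrix.mul_one, hQ2]
  have hdet : ∀ v : Fin m → ℝ, (Q * Matrix.diagonal v * Qᵀ).det = ∏ j, v j := by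
    intro v
    rw [Matrix.det_mul, Matrix.det_mul, Matrix.det_diagonal]
    have h1 : Q.det * Qᵀ.det = 1 := by rw [← Matrix.det_mul, hQ2, Matrix.det_one]
    linear_combination (∏ j, v j) * h1
  have hsmul : ∀ c : ℝ, c • (1 : Matrix (Fin m) (Fin m) ℝ)
      = Q * Matrix.diagonal (fun _ => c) * Qᵀ := by
    intro c
    rw [← Matrix.smul_one_eq_diagonal, Matrix.mul_smul, Matrix.mul_one, Matrix.smul_mul, hQ2]
  have hYY : B + σ2 • (1 : Matrix (Fin m) (Fin m) ℝ) = Q * Matrix.diagonal sY * Qᵀ := by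
    rw [hBspec, hsmul σ2, ← Matrix.add_mul, ← Matrix.mul_add, Matrix.diagonal_add]
  have hYA : B + σ2 • (1 : Matrix (Fin m) (Fin m) ℝ) + l⁻¹ • B
      = Q * Matrix.diagonal sA * Qᵀ := by
    have hsB : l⁻¹ • B = Q * Matrix.diagonal (fun j => l⁻¹ * d j) * Qᵀ := by
      rw [hBspec]
      rw [show (fun j => l⁻¹ * d j) = (l⁻¹ • d) from rfl, Matrix.diagonal_smul,
        Matrix.mul_smul, Matrix.smul_mul]
    rw [hYY, hsB, ← Matrix.add_mul, ← Matrix.mul_add, Matrix.diagonal_add]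
  -- T
  set r : Fin m → ℝ := fun j => Real.sqrt (sA j) with hrdef
  have hr2 : ∀ j, r j * r j = sA j := fun j => Real.mul_self_sqrt (hsA j).le
  have hrne : ∀ j, r j ≠ 0 := fun j => ne_of_gt (Real.sqrt_pos.mpr (hsA j))
  set T : Matrix (Fin m) (Fin m) ℝ := Q * Matrix.diagonal r with hTdef
  have hTt : Tᵀ = Matrix.diagonal r * Qᵀ := by
    rw [hTdef, Matrix.transpose_mul, Matrix.diagonal_transpose]
  have hTT : T * Tᵀ = Q * Matrix.diagonal sA * Qᵀ := by
    rw [hTt, hTdef]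
    simp only [Matrix.mul_assoc]
    rw [← Matrix.mul_assoc (Matrix.diagonal r) (Matrix.diagonal r), Matrix.diagonal_mul_diagonal]
    have h2 : (fun i => r i * r i) = sA := funext hr2
    rw [h2]
  have hQdet : Q.det ≠ 0 := by
    intro h
    have h1 : Q.det * Qᵀ.det = 1 := by rw [← Matrix.det_mul, hQ2, Matrix.det_one]
    rw [h, zero_mul] at h1
    exact zero_ne_one h1
  have hdetT : T.det ≠ 0 := by
    rw [hTdef, Matrix.det_mul, Matrix.det_diagonal]
    exact mul_ne_zero hQdet (Finset.prod_ne_zero_iff.mpr fun j _ => hrne j)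
  -- quadratic forms
  have hdotT : ∀ (N : Matrix (Fin m) (Fin m) ℝ) (w : Fin m → ℝ),
      (T *ᵥ w) ⬝ᵥ (N *ᵥ (T *ᵥ w)) = w ⬝ᵥ ((Tᵀ * N * T) *ᵥ w) := by
    intro N w
    rw [Matrix.mulVec_mulVec, Matrix.dotProduct_mulVec (T *ᵥ w), Matrix.dotProduct_mulVec w,
      ← Matrix.vecMul_transpose, Matrix.vecMul_vecMul, Matrix.mul_assoc]
  have hTqT : ∀ v : Fin m → ℝ,
      Tᵀ * (Q * Matrix.diagonal v * Qᵀ) * T = Matrix.diagonal (fun j => sA j * v j) := by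
    intro v
    rw [hTt, hTdef]
    simp only [Matrix.mul_assoc]
    rw [hQcancel, hQcancel, Matrix.diagonal_mul_diagonal, Matrix.diagonal_mul_diagonal]
    refine congrArg Matrix.diagonal (funext fun j => ?_)
    linear_combination v j * hr2 j
  -- pdf values
  have hcard : Fintype.card (Fin m) = m := Fintype.card_fin m
  have hπ : (0:ℝ) < (2 * Real.pi) ^ m := by positivity
  set PA : ℝ := ∏ j, sA j with hPAdef
  set PY : ℝ := ∏ j, sY j with hPYdef
  have hPA : 0 < PA := Finset.prod_pos fun j _ => hsA j
  have hPY : 0 < PY := Finset.prod_pos fun j _ => hsY j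
  have hpdfA : ∀ w : Fin m → ℝ,
      gaussianPdf (B + σ2 • (1 : Matrix (Fin m) (Fin m) ℝ) + l⁻¹ • B) (T *ᵥ w)
        = (1 / Real.sqrt ((2 * Real.pi) ^ m * PA))
            * Real.exp (-(1/2) * ∑ j, w j ^ 2) := by
    intro w
    unfold gaussianPdf
    rw [hYA, hinv sA (fun j => (hsA j).ne'), hdet sA, hdotT, hTqT, hcard]
    congr 2
    have h1 : (fun j => sA j * (sA j)⁻¹) = fun _ : Fin m => (1:ℝ) :=
      funext fun j => mul_inv_cancel₀ (hsA j).ne'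
    rw [h1, aux_dotProduct_diagonal]
    simp
  have hpdfY : ∀ w : Fin m → ℝ,
      gaussianPdf (B + σ2 • (1 : Matrix (Fin m) (Fin m) ℝ)) (T *ᵥ w)
        = (1 / Real.sqrt ((2 * Real.pi) ^ m * PY))
            * Real.exp (-(1/2) * ∑ j, (sA j * (sY j)⁻¹) * w j ^ 2) := by
    intro w
    unfold gaussianPdf
    rw [hYY, hinv sY (fun j => (hsY j).ne'), hdet sY, hdotT, hTqT, hcard,
      aux_dotProduct_diagonal]
  -- Δ and the determinant/product identities
  set Δ : Fin p → ℝ := fun i => μ i / (μ i + σ2) with hΔdef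
  have hμσ : ∀ i, 0 < μ i + σ2 := fun i => add_pos (hμpos i) hσ2
  have hdetΔ : ((1 : Matrix (Fin p) (Fin p) ℝ) + l⁻¹ • Matrix.diagonal Δ).det = PA / PY := by
    have h1 : (1 : Matrix (Fin p) (Fin p) ℝ) + l⁻¹ • Matrix.diagonal Δ
        = Matrix.diagonal (fun i => 1 + l⁻¹ * Δ i) := by
      rw [← Matrix.diagonal_one, ← Matrix.diagonal_smul, Matrix.diagonal_add]
      simp [Pi.smul_apply, smul_eq_mul]
    rw [h1, Matrix.det_diagonal, hPAdef, hPYdef, ← Finset.prod_div_distrib]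
    symm
    have hfun1 : ∀ j ∈ Finset.univ, j ∉ Finset.image g Finset.univ → sA j / sY j = 1 := by
      intro j _ hj
      have hz : d j = 0 := by
        apply hgzero
        intro ⟨i, hi⟩
        exact hj (Finset.mem_image.mpr ⟨i, Finset.mem_univ i, hi⟩)
      have h2 : sA j = σ2 := by simp [hsAdef, hz]
      have h3 : sY j = σ2 := by simp [hsYdef, hz]
      rw [h2, h3, div_self hσ2.ne']
    rw [← Finset.prod_subset (Finset.subset_univ (Finset.image g Finset.univ)) hfun1,
      Finset.prod_image (fun x _ y _ h => hg h)]
    refine Finset.prod_congr rfl fun i _ => ?_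
    have h2 : sA (g i) = μ i + σ2 + l⁻¹ * μ i := by simp [hsAdef, hgval i]
    have h3 : sY (g i) = μ i + σ2 := by simp [hsYdef, hgval i]
    have h4 : Δ i = μ i / (μ i + σ2) := rfl
    rw [h2, h3, h4]
    field_simp [(hμσ i).ne', hl0.ne']
  have hsum : ∀ w : Fin m → ℝ, (w ∘ g) ⬝ᵥ (Matrix.diagonal Δ *ᵥ (w ∘ g))
      = ∑ j, (d j * (sY j)⁻¹) * w j ^ 2 := by
    intro w
    rw [aux_dotProduct_diagonal]
    symm
    have hfun0 : ∀ j ∈ Finset.univ, j ∉ Finset.image g Finset.univ →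
        (d j * (sY j)⁻¹) * w j ^ 2 = 0 := by
      intro j _ hj
      have hz : d j = 0 := by
        apply hgzero
        intro ⟨i, hi⟩
        exact hj (Finset.mem_image.mpr ⟨i, Finset.mem_univ i, hi⟩)
      rw [hz]; ring
    rw [← Finset.sum_subset (Finset.subset_univ (Finset.image g Finset.univ)) hfun0,
      Finset.sum_image (fun x _ y _ h => hg h)]
    refine Finset.sum_congr rfl fun i _ => ?_
    have h3 : sY (g i) = μ i + σ2 := by simp [hsYdef, hgval i]
    have h4 : Δ i = μ i / (μ i + σ2) := rfl
    have h5 : (w ∘ g) i = w (g i) := rfl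
    rw [h3, hgval i, h4, h5]
    ring
  -- the key pointwise iff
  have hiff : ∀ w : Fin m → ℝ,
      (τ ≤ gaussianPdf (B + σ2 • (1 : Matrix (Fin m) (Fin m) ℝ) + l⁻¹ • B) (T *ᵥ w)
          / gaussianPdf (B + σ2 • (1 : Matrix (Fin m) (Fin m) ℝ)) (T *ᵥ w))
        ↔ (l * (2 * Real.log τ
              + Real.log ((1 : Matrix (Fin p) (Fin p) ℝ) + l⁻¹ • Matrix.diagonal Δ).det)
            ≤ (w ∘ g) ⬝ᵥ (Matrix.diagonal Δ *ᵥ (w ∘ g))) := by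
    intro w
    rw [hpdfA w, hpdfY w, hdetΔ, hsum w]
    set su := ∑ j, w j ^ 2 with hsu
    set sc := ∑ j, (sA j * (sY j)⁻¹) * w j ^ 2 with hsc
    set S := ∑ j, (d j * (sY j)⁻¹) * w j ^ 2 with hS
    have hscsu : sc - su = l⁻¹ * S := by
      rw [hsc, hsu, hS, ← Finset.sum_sub_distrib, Finset.mul_sum]
      refine Finset.sum_congr rfl fun j _ => ?_
      have h0 : sY j ≠ 0 := (hsY j).ne'
      have h1 : sA j = sY j + l⁻¹ * d j := rfl
      rw [h1]
      field_simp
      ring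
    set P := PA / PY with hPdef
    have hP : 0 < P := div_pos hPA hPY
    have hsP : 0 < Real.sqrt P := Real.sqrt_pos.mpr hP
    have hπ' : (0:ℝ) ≤ (2 * Real.pi) ^ m := hπ.le
    have hsqcπ : (0:ℝ) < Real.sqrt ((2 * Real.pi) ^ m) := Real.sqrt_pos.mpr hπ
    have hsPA : (0:ℝ) < Real.sqrt PA := Real.sqrt_pos.mpr hPA
    have hsPY : (0:ℝ) < Real.sqrt PY := Real.sqrt_pos.mpr hPY
    have hratio : (1 / Real.sqrt ((2 * Real.pi) ^ m * PA) * Real.exp (-(1/2) * su))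
        / (1 / Real.sqrt ((2 * Real.pi) ^ m * PY) * Real.exp (-(1/2) * sc))
        = (Real.sqrt P)⁻¹ * Real.exp ((1/2) * (l⁻¹ * S)) := by
      rw [← hscsu, show (1/2) * (sc - su) = (-(1/2) * su) - (-(1/2) * sc) from by ring,
        Real.exp_sub, Real.sqrt_mul hπ' PA, Real.sqrt_mul hπ' PY, hPdef,
        Real.sqrt_div hPA.le]
      field_simp
    rw [hratio]
    have hR : 0 < (Real.sqrt P)⁻¹ * Real.exp ((1/2) * (l⁻¹ * S)) :=
      mul_pos (inv_pos.mpr hsP) (Real.exp_pos _)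
    rw [← Real.log_le_log_iff hτ hR,
      Real.log_mul (inv_pos.mpr hsP).ne' (Real.exp_ne_zero _), Real.log_exp,
      Real.log_inv, Real.log_sqrt hP.le]
    constructor
    · intro h
      have h2 : 2 * Real.log τ + Real.log P ≤ l⁻¹ * S := by linarith
      calc l * (2 * Real.log τ + Real.log P) ≤ l * (l⁻¹ * S) :=
            mul_le_mul_of_nonneg_left h2 hl0.le
        _ = S := by rw [← mul_assoc, mul_inv_cancel₀ hl0.ne', one_mul]
    · intro h
      have h2 : l⁻¹ * (l * (2 * Real.log τ + Real.log P)) ≤ l⁻¹ * S :=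
        mul_le_mul_of_nonneg_left h hlinv
      rw [← mul_assoc, inv_mul_cancel₀ hl0.ne', one_mul] at h2
      linarith
  -- final measure chain
  have hTmeas : Measurable (⇑(Matrix.toLin' T)) := (LinearMap.continuous_on_pi _).measurable
  have hproj : Measurable fun w : Fin m → ℝ => w ∘ g :=
    measurable_pi_lambda _ fun i => measurable_pi_apply (g i)
  have hEmeas : MeasurableSet {y : Fin m → ℝ |
      τ ≤ gaussianPdf (B + σ2 • (1 : Matrix (Fin m) (Fin m) ℝ) + l⁻¹ • B) y
        / gaussianPdf (B + σ2 • (1 : Matrix (Fin m) (Fin m) ℝ)) y} :=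
    measurableSet_le measurable_const
      ((aux_measurable_gaussianPdf _).div (aux_measurable_gaussianPdf _))
  have hSpmeas : MeasurableSet {u : Fin p → ℝ |
      l * (2 * Real.log τ
          + Real.log ((1 : Matrix (Fin p) (Fin p) ℝ) + l⁻¹ • Matrix.diagonal Δ).det)
        ≤ u ⬝ᵥ (Matrix.diagonal Δ *ᵥ u)} :=
    measurableSet_le measurable_const (aux_measurable_quadForm _)
  have hmap : gaussianMeasure (B + σ2 • (1 : Matrix (Fin m) (Fin m) ℝ) + l⁻¹ • B)
      = Measure.map (⇑(Matrix.toLin' T)) (gaussianMeasure 1) := by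
    rw [show B + σ2 • (1 : Matrix (Fin m) (Fin m) ℝ) + l⁻¹ • B = T * Tᵀ from
      hYA.trans hTT.symm]
    exact aux_gaussianMeasure_mul_transpose T hdetT
  rw [hmap, Measure.map_apply hTmeas hEmeas]
  have hset : (⇑(Matrix.toLin' T)) ⁻¹' {y : Fin m → ℝ |
        τ ≤ gaussianPdf (B + σ2 • (1 : Matrix (Fin m) (Fin m) ℝ) + l⁻¹ • B) y
          / gaussianPdf (B + σ2 • (1 : Matrix (Fin m) (Fin m) ℝ)) y}
      = (fun w : Fin m → ℝ => w ∘ g) ⁻¹' {u : Fin p → ℝ |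
        l * (2 * Real.log τ
            + Real.log ((1 : Matrix (Fin p) (Fin p) ℝ) + l⁻¹ • Matrix.diagonal Δ).det)
          ≤ u ⬝ᵥ (Matrix.diagonal Δ *ᵥ u)} := by
    ext w
    simp only [Set.mem_preimage, Set.mem_setOf_eq, Matrix.toLin'_apply]
    exact hiff w
  rw [hset, ← Measure.map_apply hproj hSpmeas,
    aux_gaussianMeasure_one_eq_pi m, aux_map_proj_pi g hg, ← aux_gaussianMeasure_one_eq_pi p]
end

section
/- Let p be a natural number, let Δ ∈ ℝ^{p×p} be a nonzero diagonal matrix with diagonal entries in [0, 1], let τ > 1, let t > 0, and let U ~ N(0, I_p) be a standard Gaussian vector in ℝ^p. Let λ*(t) be the unique positive solution of 2 λ log τ − tr(Δ²)/(2λ) − 2 √( tr(Δ²) t ) − 2 ‖Δ‖_∞ t = 0, where ‖Δ‖_∞ is the largest diagonal entry of Δ. Then for every λ ≥ max(λ*(t), 1), ℙ[ Uᵀ Δ U ≥ λ ( 2 log τ + log det( I_p + λ⁻¹ Δ ) ) ] ≤ e^{−t}; consequently the probability of detection of the generalized stealth attack with weighting parameter λ by the likelihood ratio test with threshold τ is at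 most e^{−t}. -/
open MeasureTheory ProbabilityTheory Matrix

/-- The standard Gaussian measure `N(0, I_p)` on `Fin p → ℝ`. -/
noncomputable def stdGaussian (p : ℕ) : Measure (Fin p → ℝ) :=
  Measure.pi fun _ => gaussianReal 0 1

section Helpers

open Real

lemma my_neg_log_one_sub_le {x : ℝ} (hx0 : 0 ≤ x) (hx1 : x < 1) :
    -Real.log (1 - x) ≤ x + x ^ 2 / (2 * (1 - x)) := by
  set f : ℝ → ℝ := fun z => Real.log (1 - z) + z + z ^ 2 / (2 * (1 - z)) with hf
  have H : ∀ z : ℝ, z < 1 → HasDerivAt f (z ^ 2 / (2 * (1 - z) ^ 2)) z := by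
    intro z hz
    have h0 : (0:ℝ) < 1 - z := by linarith
    have h1 : HasDerivAt (fun w : ℝ => 1 - w) (-1) z := (hasDerivAt_id z).const_sub 1
    have h2 := ((h1.log h0.ne').add (hasDerivAt_id z)).add
      ((hasDerivAt_pow 2 z).div (h1.const_mul 2) ((mul_pos two_pos h0).ne'))
    refine h2.congr_deriv ?_
    field_simp
    ring
  have mono : MonotoneOn f (Set.Icc 0 x) := by
    apply monotoneOn_of_hasDerivWithinAt_nonneg (convex_Icc 0 x)
      (f' := fun z => z ^ 2 / (2 * (1 - z) ^ 2))
    · intro z hz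
      exact ((H z (lt_of_le_of_lt hz.2 hx1)).continuousAt).continuousWithinAt
    · intro z hz
      rw [interior_Icc] at hz
      exact (H z (hz.2.trans hx1)).hasDerivWithinAt
    · intro z hz
      positivity
  have h0x : f 0 ≤ f x := mono (Set.left_mem_Icc.2 hx0) (Set.right_mem_Icc.2 hx0) hx0
  have hzero : f 0 = 0 := by simp [hf]
  rw [hzero] at h0x
  simp only [hf] at h0x
  linarith

lemma my_le_log_one_add {y : ℝ} (hy : 0 ≤ y) :
    y - y ^ 2 / 2 ≤ Real.log (1 + y) := by
  set f : ℝ → ℝ := fun z => Real.log (1 + z) - z + z ^ 2 / 2 with hf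
  have H : ∀ z : ℝ, 0 ≤ z → HasDerivAt f (1 / (1 + z) - 1 + z) z := by
    intro z hz
    have h0 : (0:ℝ) < 1 + z := by linarith
    have h1 : HasDerivAt (fun w : ℝ => 1 + w) (1) z := by
      simpa using (hasDerivAt_id z).const_add 1
    have h2 := ((h1.log h0.ne').sub (hasDerivAt_id z)).add
      ((hasDerivAt_pow 2 z).div_const 2)
    refine h2.congr_deriv ?_
    push_cast
    ring
  have mono : MonotoneOn f (Set.Icc 0 y) := by
    apply monotoneOn_of_hasDerivWithinAt_nonneg (convex_Icc 0 y)
      (f' := fun z => 1 / (1 + z) - 1 + z)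
    · intro z hz
      exact ((H z hz.1).continuousAt).continuousWithinAt
    · intro z hz
      rw [interior_Icc] at hz
      exact (H z hz.1.le).hasDerivWithinAt
    · intro z hz
      rw [interior_Icc] at hz
      have h0 : (0:ℝ) < 1 + z := by have := hz.1; linarith
      have h1 : 1 / (1 + z) - 1 + z = z ^ 2 / (1 + z) := by field_simp; ring
      rw [h1]
      positivity
  have h0y : f 0 ≤ f y := mono (Set.left_mem_Icc.2 hy) (Set.right_mem_Icc.2 hy) hy
  have hzero : f 0 = 0 := by simp [hf]
  rw [hzero] at h0y
  simp only [hf] at h0y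
  linarith

lemma my_gauss_pt {c : ℝ} (x : ℝ) :
    gaussianPDFReal 0 1 x * Real.exp (c * x ^ 2)
      = (Real.sqrt (2 * π))⁻¹ * Real.exp (-(1/2 - c) * x ^ 2) := by
  simp only [gaussianPDFReal, NNReal.coe_one, mul_one, sub_zero]
  rw [mul_assoc, ← Real.exp_add]
  ring_nf

lemma my_smul_eq {c : ℝ} :
    (fun x => (gaussianPDFReal 0 1 x).toNNReal • Real.exp (c * x ^ 2))
      = fun x => (Real.sqrt (2 * π))⁻¹ * Real.exp (-(1/2 - c) * x ^ 2) := by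
  funext x
  rw [NNReal.smul_def, Real.coe_toNNReal _ (gaussianPDFReal_nonneg 0 1 x), smul_eq_mul,
    my_gauss_pt]

lemma my_gauss_integrable {c : ℝ} (hc : 2 * c < 1) :
    Integrable (fun x => Real.exp (c * x ^ 2)) (gaussianReal 0 1) := by
  have hb : (0:ℝ) < 1/2 - c := by linarith
  rw [gaussianReal_of_var_ne_zero 0 one_ne_zero]
  have hmeas : Measurable fun x => (gaussianPDFReal 0 1 x).toNNReal :=
    (measurable_gaussianPDFReal 0 1).real_toNNReal
  rw [show gaussianPDF 0 1 = fun x => ((gaussianPDFReal 0 1 x).toNNReal : ENNReal) from rfl]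
  rw [integrable_withDensity_iff_integrable_smul hmeas, my_smul_eq]
  exact (integrable_exp_neg_mul_sq hb).const_mul _

lemma my_gauss_integral {c : ℝ} (hc : 2 * c < 1) :
    ∫ x, Real.exp (c * x ^ 2) ∂(gaussianReal 0 1) = (Real.sqrt (1 - 2 * c))⁻¹ := by
  have hb : (0:ℝ) < 1/2 - c := by linarith
  rw [gaussianReal_of_var_ne_zero 0 one_ne_zero]
  have hmeas : Measurable fun x => (gaussianPDFReal 0 1 x).toNNReal :=
    (measurable_gaussianPDFReal 0 1).real_toNNReal
  rw [show gaussianPDF 0 1 = fun x => ((gaussianPDFReal 0 1 x).toNNReal : ENNReal) from rfl]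
  rw [integral_withDensity_eq_integral_smul hmeas, my_smul_eq,
    integral_const_mul, integral_gaussian]
  rw [show (1:ℝ) - 2 * c = 2 * (1/2 - c) by ring]
  rw [Real.sqrt_mul (by norm_num : (0:ℝ) ≤ 2) π, Real.sqrt_mul (by norm_num : (0:ℝ) ≤ 2) (1/2 - c)]
  have hπ : 0 < Real.sqrt π := Real.sqrt_pos.2 pi_pos
  have hb' : 0 < Real.sqrt (1/2 - c) := Real.sqrt_pos.2 hb
  have h2' : (0:ℝ) < Real.sqrt 2 := by positivity
  rw [Real.sqrt_div pi_pos.le]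
  field_simp

lemma my_pi_integral (p : ℕ) (c : Fin p → ℝ) (hc : ∀ i, 2 * c i < 1) :
    Integrable (fun u : Fin p → ℝ => ∏ i, Real.exp (c i * u i ^ 2)) (stdGaussian p) ∧
    ∫ u, (∏ i, Real.exp (c i * u i ^ 2)) ∂(stdGaussian p)
      = ∏ i, (Real.sqrt (1 - 2 * c i))⁻¹ := by
  letI : MeasureSpace ℝ := ⟨gaussianReal 0 1⟩
  haveI : SigmaFinite (volume : Measure ℝ) :=
    (inferInstance : SigmaFinite (gaussianReal 0 1))
  have hvol : (volume : Measure (Fin p → ℝ)) = stdGaussian p := by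
    rw [volume_pi]; rfl
  constructor
  · rw [← hvol]
    exact Integrable.fintype_prod (f := fun i x => Real.exp (c i * x ^ 2))
      (fun i => my_gauss_integrable (hc i))
  · rw [← hvol]
    rw [volume_pi, integral_fintype_prod_eq_prod (f := fun i x => Real.exp (c i * x ^ 2))]
    exact Finset.prod_congr rfl fun i _ => my_gauss_integral (hc i)

lemma my_inv_sqrt_eq {x : ℝ} (hx : 0 < x) :
    (Real.sqrt x)⁻¹ = Real.exp (-(Real.log x / 2)) := by
  have h2 : Real.exp (Real.log x / 2) * Real.exp (Real.log x / 2) = x := by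
    rw [← Real.exp_add, show Real.log x/2 + Real.log x/2 = Real.log x by ring, Real.exp_log hx]
  have h3 := Real.sqrt_mul_self (Real.exp_nonneg (Real.log x / 2))
  rw [h2] at h3
  rw [h3, ← Real.exp_neg]

end Helpers

set_option maxHeartbeats 1000000

/-- Theorem 2: let `Δ` be a nonzero diagonal matrix with entries `d_i ∈ [0,1]`, `τ > 1`,
`t > 0`, and let `λ*(t)` be the unique positive solution of
`2λ log τ − tr(Δ²)/(2λ) − 2√(tr(Δ²) t) − 2‖Δ‖_∞ t = 0`. Then for every
`λ ≥ max(λ*(t), 1)`, the probability of detection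
`ℙ[Uᵀ Δ U ≥ λ(2 log τ + log det(I + λ⁻¹ Δ))]` under `U ~ N(0, I_p)` is at most `e^{−t}`. -/
theorem prob_detection_le_exp (p : ℕ) (d : Fin p → ℝ)
    (hd : ∀ i, d i ∈ Set.Icc (0 : ℝ) 1) (hd0 : d ≠ 0)
    (τ t : ℝ) (hτ : 1 < τ) (ht : 0 < t)
    (lstar : ℝ) (hlstar : 0 < lstar)
    (heq : 2 * lstar * Real.log τ - (∑ i, d i ^ 2) / (2 * lstar)
        - 2 * Real.sqrt ((∑ i, d i ^ 2) * t) - 2 * (⨆ i, d i) * t = 0)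
    (huniq : ∀ l : ℝ, 0 < l →
        2 * l * Real.log τ - (∑ i, d i ^ 2) / (2 * l)
            - 2 * Real.sqrt ((∑ i, d i ^ 2) * t) - 2 * (⨆ i, d i) * t = 0 →
        l = lstar) :
    ∀ l : ℝ, max lstar 1 ≤ l →
      stdGaussian p
          {u : Fin p → ℝ |
            l * (2 * Real.log τ
                + Real.log ((1 : Matrix (Fin p) (Fin p) ℝ) + l⁻¹ • Matrix.diagonal d).det)
              ≤ u ⬝ᵥ (Matrix.diagonal d *ᵥ u)}
        ≤ ENNReal.ofReal (Real.exp (-t)) := by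
  intro l hl
  have hl1 : (1:ℝ) ≤ l := le_trans (le_max_right _ _) hl
  have hl0 : (0:ℝ) < l := lt_of_lt_of_le one_pos hl1
  have hlls : lstar ≤ l := le_trans (le_max_left _ _) hl
  obtain ⟨j, hj⟩ : ∃ j, d j ≠ 0 := Function.ne_iff.mp hd0
  have hdj : 0 < d j := lt_of_le_of_ne (hd j).1 (Ne.symm hj)
  have hdi0 : ∀ i, 0 ≤ d i := fun i => (hd i).1
  set v : ℝ := ∑ i, d i ^ 2 with hv
  set b : ℝ := ⨆ i, d i with hb
  have hbdd : ∀ i, d i ≤ b := fun i => le_ciSup (Set.Finite.bddAbove (Set.finite_range d)) i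
  have hb0 : 0 < b := lt_of_lt_of_le hdj (hbdd j)
  have hv0 : 0 < v := by
    have h1 : d j ^ 2 ≤ v := Finset.single_le_sum (fun i _ => sq_nonneg (d i)) (Finset.mem_univ j)
    exact lt_of_lt_of_le (pow_pos hdj 2) h1
  set trd : ℝ := ∑ i, d i with htrd
  have htrd0 : 0 ≤ trd := Finset.sum_nonneg fun i _ => hdi0 i
  set A : ℝ := Real.sqrt v with hA
  set B : ℝ := Real.sqrt t with hB
  have hA0 : 0 < A := Real.sqrt_pos.2 hv0
  have hB0 : 0 < B := Real.sqrt_pos.2 ht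
  have hA2 : A ^ 2 = v := Real.sq_sqrt hv0.le
  have hB2 : B ^ 2 = t := Real.sq_sqrt ht.le
  have hden : 0 < A + 2 * b * B := by positivity
  set s : ℝ := B / (A + 2 * b * B) with hs
  have hs0 : 0 < s := div_pos hB0 hden
  set c : ℝ := 2 * s * b with hc
  have h1c : 1 - c = A / (A + 2 * b * B) := by
    rw [hc, hs]
    field_simp
    ring
  have h1c0 : 0 < 1 - c := h1c ▸ div_pos hA0 hden
  have hc1 : c < 1 := by linarith
  clear_value v b trd A B s c
  have hcd : ∀ i, 2 * (s * d i) ≤ c := by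
    intro i
    have h1 := mul_le_mul_of_nonneg_left (hbdd i) hs0.le
    linarith
  have hcd0 : ∀ i, 0 ≤ 2 * (s * d i) := by
    intro i
    have := hdi0 i
    positivity
  set z : ℝ := 2 * Real.sqrt (v * t) + 2 * b * t with hz
  have hzAB : Real.sqrt (v * t) = A * B := by rw [hA, hB]; exact Real.sqrt_mul hv0.le t
  have hkey : s * z - s ^ 2 * v / (1 - c) = t := by
    rw [hz, hzAB, h1c, hs, ← hA2, ← hB2]
    field_simp
    ring
  -- lower bound the threshold
  have hdet : ((1 : Matrix (Fin p) (Fin p) ℝ) + l⁻¹ • Matrix.diagonal d).det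
      = ∏ i, (1 + l⁻¹ * d i) := by
    rw [← Matrix.diagonal_one, ← Matrix.diagonal_smul, Matrix.diagonal_add, Matrix.det_diagonal]
    rfl
  have hli : 0 < l⁻¹ := inv_pos.2 hl0
  have hpos_i : ∀ i, 0 < 1 + l⁻¹ * d i := by
    intro i
    have h1 := mul_nonneg hli.le (hdi0 i)
    linarith
  have hlogprod : Real.log (∏ i, (1 + l⁻¹ * d i)) = ∑ i, Real.log (1 + l⁻¹ * d i) :=
    Real.log_prod fun i _ => (hpos_i i).ne'
  have hlogτ : 0 < Real.log τ := Real.log_pos hτ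
  set a : ℝ := l * (2 * Real.log τ
      + Real.log ((1 : Matrix (Fin p) (Fin p) ℝ) + l⁻¹ • Matrix.diagonal d).det) with ha
  have han : trd + z ≤ a := by
    have hsumlog : l⁻¹ * trd - l⁻¹ ^ 2 * v / 2 ≤ ∑ i, Real.log (1 + l⁻¹ * d i) := by
      have h1 : ∀ i ∈ Finset.univ, l⁻¹ * d i - (l⁻¹ * d i) ^ 2 / 2
          ≤ Real.log (1 + l⁻¹ * d i) := fun i _ =>
        my_le_log_one_add (mul_nonneg hli.le (hdi0 i))
      have h2 := Finset.sum_le_sum h1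
      have e1 : ∑ i, (l⁻¹ * d i - (l⁻¹ * d i) ^ 2 / 2) = l⁻¹ * trd - l⁻¹ ^ 2 * v / 2 := by
        rw [Finset.sum_sub_distrib, ← Finset.mul_sum, ← htrd]
        have e2 : ∑ i, (l⁻¹ * d i) ^ 2 / 2 = l⁻¹ ^ 2 * v / 2 := by
          rw [hv, Finset.mul_sum, Finset.sum_div]
          exact Finset.sum_congr rfl fun i _ => by ring
        rw [e2]
      rw [← e1]
      exact h2
    have hmono : v / (2 * l) + z ≤ 2 * l * Real.log τ := by
      have h1 : 2 * lstar * Real.log τ - v / (2 * lstar) = z := by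
        rw [hz]; linarith [heq]
      have h2 : 2 * lstar * Real.log τ ≤ 2 * l * Real.log τ :=
        mul_le_mul_of_nonneg_right (by linarith) hlogτ.le
      have h3 : v / (2 * l) ≤ v / (2 * lstar) := by
        apply div_le_div_of_nonneg_left hv0.le (by linarith) (by linarith)
      linarith
    have h4 : trd - v / (2 * l) ≤ l * Real.log ((1 : Matrix (Fin p) (Fin p) ℝ)
        + l⁻¹ • Matrix.diagonal d).det := by
      rw [hdet, hlogprod]
      have h5 := mul_le_mul_of_nonneg_left hsumlog hl0.le
      have h6 : l * (l⁻¹ * trd - l⁻¹ ^ 2 * v / 2) = trd - v / (2 * l) := by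
        field_simp
      linarith
    rw [ha]
    rw [mul_add]
    have h7 : v / (2 * l) + z ≤ l * (2 * Real.log τ) := by rw [mul_comm l]; linarith [hmono]
    linarith
  -- Markov / Chernoff
  haveI : IsProbabilityMeasure (stdGaussian p) := by
    unfold _root_.stdGaussian; infer_instance
  obtain ⟨hint, hI⟩ := my_pi_integral p (fun i => s * d i)
    (fun i => lt_of_le_of_lt (hcd i) hc1)
  set g : (Fin p → ℝ) → ℝ := fun u => ∏ i, Real.exp (s * d i * u i ^ 2) with hg
  have hgnn : ∀ u, 0 ≤ g u := fun u => Finset.prod_nonneg fun i _ => (Real.exp_nonneg _)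
  have hXg : ∀ u : Fin p → ℝ, g u = Real.exp (s * (u ⬝ᵥ (Matrix.diagonal d *ᵥ u))) := by
    intro u
    have h1 : u ⬝ᵥ (Matrix.diagonal d *ᵥ u) = ∑ i, d i * u i ^ 2 := by
      simp only [dotProduct, Matrix.mulVec_diagonal]
      exact Finset.sum_congr rfl fun i _ => by ring
    rw [h1, Finset.mul_sum, Real.exp_sum, hg]
    exact Finset.prod_congr rfl fun i _ => by rw [mul_assoc]
  have hsub : {u : Fin p → ℝ | a ≤ u ⬝ᵥ (Matrix.diagonal d *ᵥ u)}
      ⊆ {u : Fin p → ℝ | Real.exp (s * a) ≤ g u} := by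
    intro u hu
    rw [Set.mem_setOf_eq, hXg u]
    exact Real.exp_le_exp.2 (mul_le_mul_of_nonneg_left hu hs0.le)
  have hM := mul_meas_ge_le_integral_of_nonneg (μ := stdGaussian p)
    (ae_of_all _ hgnn) hint (Real.exp (s * a))
  have hεpos : 0 < Real.exp (s * a) := Real.exp_pos _
  have hfin : stdGaussian p {u : Fin p → ℝ | Real.exp (s * a) ≤ g u} ≠ ⊤ := measure_ne_top _ _
  -- the analytic bound
  have hcore : (∫ u, g u ∂(stdGaussian p)) ≤ Real.exp (-t) * Real.exp (s * a) := by
    rw [hg] at hI ⊢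
    rw [hI]
    have hprod : ∀ i, (Real.sqrt (1 - 2 * (s * d i)))⁻¹
        = Real.exp (-(Real.log (1 - 2 * (s * d i)) / 2)) := fun i =>
      my_inv_sqrt_eq (by linarith [hcd i, hc1])
    calc ∏ i, (Real.sqrt (1 - 2 * (s * d i)))⁻¹
        = Real.exp (∑ i, -(Real.log (1 - 2 * (s * d i)) / 2)) := by
          rw [Real.exp_sum]
          exact Finset.prod_congr rfl fun i _ => hprod i
      _ ≤ Real.exp (-t) * Real.exp (s * a) := by
          rw [← Real.exp_add, Real.exp_le_exp]
          have hterm : ∀ i ∈ Finset.univ, -(Real.log (1 - 2 * (s * d i)) / 2)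
              ≤ s * d i + s ^ 2 / (1 - c) * d i ^ 2 := by
            intro i _
            have hx0 := hcd0 i
            have hx1 : 2 * (s * d i) < 1 := lt_of_le_of_lt (hcd i) hc1
            have h1 := my_neg_log_one_sub_le hx0 hx1
            have h2 : (2 * (s * d i)) ^ 2 / (2 * (1 - 2 * (s * d i)))
                ≤ (2 * (s * d i)) ^ 2 / (2 * (1 - c)) := by
              apply div_le_div_of_nonneg_left (sq_nonneg _) (by linarith) (by linarith [hcd i])
            have h3 : (2 * (s * d i)) ^ 2 / (2 * (1 - c)) / 2
                = s ^ 2 / (1 - c) * d i ^ 2 := by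
              field_simp
            linarith
          have hsum := Finset.sum_le_sum hterm
          have hsum2 : ∑ i, (s * d i + s ^ 2 / (1 - c) * d i ^ 2)
              = s * trd + s ^ 2 * v / (1 - c) := by
            rw [Finset.sum_add_distrib, ← Finset.mul_sum, ← Finset.mul_sum, htrd, hv]
            ring
          rw [hsum2] at hsum
          have h8 : s * (trd + z) ≤ s * a := mul_le_mul_of_nonneg_left han hs0.le
          have h9 : s * (trd + z) = s * trd + s * z := by ring
          have h10 : s ^ 2 * v / (1 - c) = s * z - t := by linarith only [hkey]
          rw [h10] at hsum
          refine le_trans hsum ?_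
          linarith only [h8, h9]
  have hT : (stdGaussian p {u : Fin p → ℝ | Real.exp (s * a) ≤ g u}).toReal
      ≤ Real.exp (-t) := by
    have h1 : (stdGaussian p {u : Fin p → ℝ | Real.exp (s * a) ≤ g u}).toReal
        ≤ (∫ u, g u ∂(stdGaussian p)) / Real.exp (s * a) :=
      (le_div_iff₀ hεpos).2 (by rw [mul_comm]; exact hM)
    refine h1.trans ?_
    rw [div_le_iff₀ hεpos]
    exact hcore
  calc stdGaussian p {u : Fin p → ℝ | a ≤ u ⬝ᵥ (Matrix.diagonal d *ᵥ u)}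
      ≤ stdGaussian p {u : Fin p → ℝ | Real.exp (s * a) ≤ g u} := measure_mono hsub
    _ = ENNReal.ofReal ((stdGaussian p {u : Fin p → ℝ | Real.exp (s * a) ≤ g u}).toReal) :=
        (ENNReal.ofReal_toReal hfin).symm
    _ ≤ ENNReal.ofReal (Real.exp (-t)) := ENNReal.ofReal_le_ofReal hT
end
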